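/- Let X and Y be compact Hausdorff spaces, f : X → Y a homeomorphism, and suppose X, Y are both embedded as closed subspaces of a product ∏_{ξ<ω₁} K_ξ of compact metrizable spaces. Then there is a closed unbounded set of α < ω₁ such that f descends to the α-projections: there is a homeomorphism f_α : π_α(X) → π_α(Y) with π_α ∘ f = f_α ∘ π_α ↾ X, where π_α is projection onto the first α coordinates. -/

import Mathlib

open Set

/-- The first uncountable ordinal. -/
noncomputable def omega1 : Ordinal := (Cardinal.aleph 1).ord

/-- Projection onto the first `α` coordinates of a product indexed by `{ξ // ξ < β}`. -/
def projTo (K : Ordinal → Type*) {α β : Ordinal} (h : α ≤ β)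
    (x : ∀ ξ : {ξ : Ordinal // ξ < β}, K ξ) : ∀ ξ : {ξ : Ordinal // ξ < α}, K ξ :=
  fun ξ => x ⟨ξ.1, lt_of_lt_of_le ξ.2 h⟩

/-- A club (closed unbounded) subset of `ω₁`. -/
def IsClubIn (C : Set Ordinal) : Prop :=
  (∀ α ∈ C, α < omega1) ∧
  (∀ β < omega1, ∃ α ∈ C, β < α) ∧
  (∀ β, β < omega1 → 0 < β → (∀ γ < β, ∃ α ∈ C, γ < α ∧ α < β) → β ∈ C)

/-! ### Auxiliary ordinal lemmas -/

lemma omega1_isLimit : Order.IsSuccLimit omega1 :=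
  Cardinal.isSuccLimit_ord (Cardinal.aleph0_le_aleph 1)

lemma succ_lt_omega1 {β : Ordinal} (h : β < omega1) : β + 1 < omega1 := by
  have := omega1_isLimit.succ_lt h
  rwa [Ordinal.add_one_eq_succ]

lemma aleph_one_eq_succ : (Cardinal.aleph 1) = Order.succ (Cardinal.aleph0) := by
  rw [← Cardinal.aleph_zero, ← Cardinal.aleph_succ, Ordinal.succ_zero]

universe u in
lemma countable_lt_omega1 {β : Ordinal.{u}} (h : β < omega1) :
    Countable {ξ : Ordinal.{u} // ξ < β} := by
  have h2 : β.card < Cardinal.aleph 1 := Cardinal.lt_ord.mp h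
  have h3 : β.card ≤ Cardinal.aleph0 := by
    rwa [aleph_one_eq_succ, Order.lt_succ_iff] at h2
  have h4 : Cardinal.mk {ξ : Ordinal.{u} // ξ < β} ≤ Cardinal.aleph0.{u + 1} := by
    rw [show Cardinal.mk {ξ : Ordinal.{u} // ξ < β} = Cardinal.lift.{u + 1} β.card from
      Ordinal.mk_Iio_ordinal β, ← Cardinal.lift_aleph0.{u + 1, u}]
    exact Cardinal.lift_le.mpr h3
  exact Cardinal.mk_le_aleph0_iff.mp h4

lemma iSup_lt_omega1 {f : ℕ → Ordinal} (hf : ∀ n, f n < omega1) : iSup f < omega1 := by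
  apply Ordinal.iSup_lt_ord_lift _ hf
  rw [omega1, Cardinal.isRegular_aleph_one.cof_eq]
  apply lt_of_le_of_lt (le_of_eq _) Cardinal.aleph0_lt_aleph_one
  rw [Cardinal.mk_nat, Cardinal.lift_aleph0]

lemma exists_bound (S : Set {ξ : Ordinal // ξ < omega1}) (hS : S.Countable)
    {β : Ordinal} (hβ : β < omega1) :
    ∃ α, β < α ∧ α < omega1 ∧ ∀ ξ ∈ S, ξ.1 < α := by
  obtain ⟨e, he⟩ := (hS.insert ⟨β, hβ⟩).exists_eq_range (insert_nonempty _ _)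
  set g : ℕ → Ordinal := fun n => (e n).1 + 1 with hg
  have hglt : ∀ n, g n < omega1 := fun n => succ_lt_omega1 (e n).2
  have hle : ∀ n, g n ≤ iSup g := fun n => Ordinal.le_iSup g n
  have hself : ∀ n, (e n).1 < iSup g := by
    intro n
    refine lt_of_lt_of_le ?_ (hle n)
    show ((e n).1 : Ordinal) < (e n).1 + 1
    rw [Ordinal.add_one_eq_succ]
    exact Order.lt_succ _
  refine ⟨iSup g, ?_, iSup_lt_omega1 hglt, ?_⟩
  · obtain ⟨n, hn⟩ : (⟨β, hβ⟩ : {ξ : Ordinal // ξ < omega1}) ∈ range e := by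
      rw [← he]; exact mem_insert _ _
    have := hself n
    rwa [hn] at this
  · intro ξ hξ
    obtain ⟨n, hn⟩ : ξ ∈ range e := by
      rw [← he]; exact mem_insert_of_mem _ hξ
    have := hself n
    rwa [hn] at this

/-! ### Countable dependence of continuous maps into metric spaces -/

lemma depends_countably {I : Type*} {K : I → Type*} [∀ i, TopologicalSpace (K i)]
    {X : Set (∀ i, K i)} (hXc : IsCompact X) {M : Type*} [MetricSpace M]
    (F : X → M) (hF : Continuous F) :
    ∃ S : Set I, S.Countable ∧ ∀ x x' : X, (∀ i ∈ S, x.1 i = x'.1 i) → F x = F x' := by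
  classical
  have main : ∀ (n : ℕ) (x : X), ∃ (t : Finset I) (u : ∀ i, Set (K i)),
      (∀ i ∈ t, IsOpen (u i)) ∧ x.1 ∈ (↑t : Set I).pi u ∧
      ∀ z : X, z.1 ∈ (↑t : Set I).pi u → dist (F z) (F x) < 1 / (n + 1) := by
    intro n x
    have hpos : (0 : ℝ) < 1 / (n + 1) := by positivity
    have hball : IsOpen (F ⁻¹' Metric.ball (F x) (1 / (n + 1))) :=
      hF.isOpen_preimage _ Metric.isOpen_ball
    rw [isOpen_induced_iff] at hball
    obtain ⟨V, hV, hVeq⟩ := hball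
    have hxV : x.1 ∈ V := by
      have : x ∈ Subtype.val ⁻¹' V := by
        rw [hVeq]; exact Metric.mem_ball_self hpos
      exact this
    obtain ⟨t, u, h1, h2⟩ := (isOpen_pi_iff.mp hV) x.1 hxV
    refine ⟨t, u, fun i hi => (h1 i hi).1, fun i hi => (h1 i hi).2, fun z hz => ?_⟩
    have hzV : z ∈ Subtype.val ⁻¹' V := h2 hz
    rw [hVeq] at hzV
    simpa [Metric.mem_ball] using hzV
  choose T u hopen hmem hlt using main
  have cover : ∀ n : ℕ, ∃ s : Finset X, X ⊆ ⋃ x ∈ s, (↑(T n x) : Set I).pi (u n x) := by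
    intro n
    apply hXc.elim_finite_subcover (fun x : X => (↑(T n x) : Set I).pi (u n x))
      (fun x => isOpen_set_pi (T n x).finite_toSet (fun i hi => hopen n x i hi))
    intro z hz
    exact mem_iUnion.mpr ⟨⟨z, hz⟩, hmem n ⟨z, hz⟩⟩
  choose s hs using cover
  refine ⟨⋃ n, ⋃ x ∈ s n, ↑(T n x), ?_, ?_⟩
  · exact countable_iUnion fun n =>
      ((s n).finite_toSet.biUnion fun x _ => (T n x).finite_toSet).countable
  · intro x x' hxx'
    refine eq_of_forall_dist_le fun ε hε => ?_
    obtain ⟨n, hn⟩ := exists_nat_one_div_lt (half_pos hε)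
    have hxmem := hs n x.2
    rw [mem_iUnion₂] at hxmem
    obtain ⟨z, hzs, hxz⟩ := hxmem
    have hx'z : x'.1 ∈ (↑(T n z) : Set I).pi (u n z) := by
      intro i hi
      have hiS : i ∈ ⋃ n, ⋃ x ∈ s n, (↑(T n x) : Set I) :=
        mem_iUnion.mpr ⟨n, mem_iUnion₂.mpr ⟨z, hzs, hi⟩⟩
      rw [← hxx' i hiS]
      exact hxz i hi
    have d1 := hlt n z x hxz
    have d2 := hlt n z x' hx'z
    have : dist (F x) (F x') < ε := by
      calc dist (F x) (F x') ≤ dist (F x) (F z) + dist (F z) (F x') := dist_triangle _ _ _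
        _ < 1 / (n + 1) + 1 / (n + 1) := by
            rw [dist_comm (F z) (F x')]; exact add_lt_add d1 d2
        _ < ε / 2 + ε / 2 := add_lt_add hn hn
        _ = ε := by ring
    exact this.le

/-! ### Descent machinery -/

/-- Two points of the product agree below `α`. -/
def EqBelow {K : Ordinal → Type} (α : Ordinal)
    (x x' : ∀ ξ : {ξ : Ordinal // ξ < omega1}, K ξ) : Prop :=
  ∀ ξ : {ξ : Ordinal // ξ < omega1}, ξ.1 < α → x ξ = x' ξ

lemma projTo_eq_iff {K : Ordinal → Type} {α : Ordinal} (h : α ≤ omega1)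
    {x x' : ∀ ξ : {ξ : Ordinal // ξ < omega1}, K ξ} :
    projTo K h x = projTo K h x' ↔ EqBelow α x x' := by
  constructor
  · intro he ξ hξ
    exact congrFun he ⟨ξ.1, hξ⟩
  · intro he
    funext ξ
    exact he ⟨ξ.1, lt_of_lt_of_le ξ.2 h⟩ ξ.2

section Descent

variable (K : Ordinal → Type) [∀ ξ, TopologicalSpace (K ξ)]
    [∀ ξ, CompactSpace (K ξ)] [∀ ξ, TopologicalSpace.MetrizableSpace (K ξ)]
    (X Y : Set (∀ ξ : {ξ : Ordinal // ξ < omega1}, K ξ))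

lemma exists_next (hX : IsClosed X) (hY : IsClosed Y) (f : X ≃ₜ Y)
    {β : Ordinal} (hβ : β < omega1) :
    ∃ α, β < α ∧ α < omega1 ∧
      (∀ x x' : X, EqBelow α x.1 x'.1 → EqBelow β (f x).1 (f x').1) ∧
      (∀ y y' : Y, EqBelow α y.1 y'.1 → EqBelow β (f.symm y).1 (f.symm y').1) := by
  haveI : Countable {ξ : Ordinal // ξ < β} := countable_lt_omega1 hβ
  letI : MetricSpace (∀ ξ : {ξ : Ordinal // ξ < β}, K ξ) :=
    TopologicalSpace.metrizableSpaceMetric _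
  have hXc : IsCompact X := hX.isCompact
  have hYc : IsCompact Y := hY.isCompact
  have hcont : Continuous (projTo K hβ.le :
      (∀ ξ : {ξ : Ordinal // ξ < omega1}, K ξ) → ∀ ξ : {ξ : Ordinal // ξ < β}, K ξ) :=
    continuous_pi fun ξ => continuous_apply _
  obtain ⟨S₁, hS₁c, hS₁⟩ := depends_countably hXc (fun x => projTo K hβ.le (f x).1)
    (hcont.comp (continuous_subtype_val.comp f.continuous))
  obtain ⟨S₂, hS₂c, hS₂⟩ := depends_countably hYc (fun y => projTo K hβ.le (f.symm y).1)
    (hcont.comp (continuous_subtype_val.comp f.symm.continuous))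
  obtain ⟨α, hβα, hα, hbound⟩ := exists_bound (S₁ ∪ S₂) (hS₁c.union hS₂c) hβ
  refine ⟨α, hβα, hα, ?_, ?_⟩
  · intro x x' hxx'
    exact (projTo_eq_iff hβ.le).mp
      (hS₁ x x' (fun i hi => hxx' i (hbound i (Or.inl hi))))
  · intro y y' hyy'
    exact (projTo_eq_iff hβ.le).mp
      (hS₂ y y' (fun i hi => hyy' i (hbound i (Or.inr hi))))

lemma exists_descent_point (hX : IsClosed X) (hY : IsClosed Y) (f : X ≃ₜ Y)
    {β : Ordinal} (hβ : β < omega1) :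
    ∃ α, β < α ∧ α < omega1 ∧
      (∀ x x' : X, EqBelow α x.1 x'.1 → EqBelow α (f x).1 (f x').1) ∧
      (∀ y y' : Y, EqBelow α y.1 y'.1 → EqBelow α (f.symm y).1 (f.symm y').1) := by
  classical
  have Hnxt : ∀ γ : Ordinal, ∃ δ, γ < omega1 → (γ < δ ∧ δ < omega1 ∧
      (∀ x x' : X, EqBelow δ x.1 x'.1 → EqBelow γ (f x).1 (f x').1) ∧
      (∀ y y' : Y, EqBelow δ y.1 y'.1 → EqBelow γ (f.symm y).1 (f.symm y').1)) := by
    intro γ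
    by_cases hγ : γ < omega1
    · obtain ⟨δ, h⟩ := exists_next K X Y hX hY f hγ
      exact ⟨δ, fun _ => h⟩
    · exact ⟨0, fun h => absurd h hγ⟩
  choose nxt hnxt using Hnxt
  set a : ℕ → Ordinal := fun n => nxt^[n] (β + 1) with ha
  have ha0 : a 0 = β + 1 := rfl
  have hasucc : ∀ n, a (n + 1) = nxt (a n) := fun n =>
    Function.iterate_succ_apply' nxt n _
  have halt : ∀ n, a n < omega1 := by
    intro n
    induction n with
    | zero => exact succ_lt_omega1 hβ
    | succ n ih => rw [hasucc]; exact ((hnxt (a n)) ih).2.1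
  set α := iSup a with hαdef
  have haα : ∀ n, a n ≤ α := fun n => Ordinal.le_iSup a n
  have hlt : α < omega1 := iSup_lt_omega1 halt
  have hβα : β < α := by
    refine lt_of_lt_of_le ?_ (haα 0)
    rw [ha0, Ordinal.add_one_eq_succ]
    exact Order.lt_succ _
  refine ⟨α, hβα, hlt, ?_, ?_⟩
  · intro x x' hxx' ξ hξ
    obtain ⟨n, hn⟩ := Ordinal.lt_iSup_iff.mp hξ
    have step := ((hnxt (a n)) (halt n)).2.2.1
    have hb : EqBelow (a (n + 1)) x.1 x'.1 :=
      fun ζ hζ => hxx' ζ (lt_of_lt_of_le hζ (haα (n + 1)))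
    rw [hasucc n] at hb
    exact step x x' hb ξ hn
  · intro y y' hyy' ξ hξ
    obtain ⟨n, hn⟩ := Ordinal.lt_iSup_iff.mp hξ
    have step := ((hnxt (a n)) (halt n)).2.2.2
    have hb : EqBelow (a (n + 1)) y.1 y'.1 :=
      fun ζ hζ => hyy' ζ (lt_of_lt_of_le hζ (haα (n + 1)))
    rw [hasucc n] at hb
    exact step y y' hb ξ hn

lemma exists_homeo (hX : IsClosed X) (hY : IsClosed Y) (f : X ≃ₜ Y)
    {α : Ordinal} (h : α ≤ omega1)
    (hd1 : ∀ x x' : X, EqBelow α x.1 x'.1 → EqBelow α (f x).1 (f x').1)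
    (hd2 : ∀ y y' : Y, EqBelow α y.1 y'.1 → EqBelow α (f.symm y).1 (f.symm y').1) :
    ∃ g : (projTo K h '' X) ≃ₜ (projTo K h '' Y),
      ∀ x : X, (g ⟨projTo K h x.1, mem_image_of_mem _ x.2⟩ : _).1
        = projTo K h (f x).1 := by
  classical
  have hXc : IsCompact X := hX.isCompact
  have hp : Continuous (projTo K h :
      (∀ ξ : {ξ : Ordinal // ξ < omega1}, K ξ) → ∀ ξ : {ξ : Ordinal // ξ < α}, K ξ) :=
    continuous_pi fun ξ => continuous_apply _
  have pickX : ∀ a : (projTo K h '' X), ∃ x : X, projTo K h x.1 = a.1 := by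
    rintro ⟨a, x, hx, rfl⟩; exact ⟨⟨x, hx⟩, rfl⟩
  choose liftX hliftX using pickX
  have pickY : ∀ b : (projTo K h '' Y), ∃ y : Y, projTo K h y.1 = b.1 := by
    rintro ⟨b, y, hy, rfl⟩; exact ⟨⟨y, hy⟩, rfl⟩
  choose liftY hliftY using pickY
  have keyX : ∀ (x : X) (a : (projTo K h '' X)), projTo K h x.1 = a.1 →
      projTo K h (f (liftX a)).1 = projTo K h (f x).1 := by
    intro x a ha
    apply (projTo_eq_iff h).mpr
    apply hd1
    apply (projTo_eq_iff h).mp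
    rw [hliftX a, ha]
  have keyY : ∀ (y : Y) (b : (projTo K h '' Y)), projTo K h y.1 = b.1 →
      projTo K h (f.symm (liftY b)).1 = projTo K h (f.symm y).1 := by
    intro y b hb
    apply (projTo_eq_iff h).mpr
    apply hd2
    apply (projTo_eq_iff h).mp
    rw [hliftY b, hb]
  set Ffun : (projTo K h '' X) → (projTo K h '' Y) :=
    fun a => ⟨projTo K h (f (liftX a)).1, mem_image_of_mem _ (f (liftX a)).2⟩ with hFdef
  set Gfun : (projTo K h '' Y) → (projTo K h '' X) :=
    fun b => ⟨projTo K h (f.symm (liftY b)).1, mem_image_of_mem _ (f.symm (liftY b)).2⟩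
    with hGdef
  have hleft : Function.LeftInverse Gfun Ffun := by
    intro a
    apply Subtype.ext
    calc (Gfun (Ffun a)).1 = projTo K h (f.symm (f (liftX a))).1 :=
          keyY (f (liftX a)) (Ffun a) rfl
      _ = projTo K h (liftX a).1 := by rw [f.symm_apply_apply]
      _ = a.1 := hliftX a
  have hright : Function.RightInverse Gfun Ffun := by
    intro b
    apply Subtype.ext
    calc (Ffun (Gfun b)).1 = projTo K h (f (f.symm (liftY b))).1 :=
          keyX (f.symm (liftY b)) (Gfun b) rfl
      _ = projTo K h (liftY b).1 := by rw [f.apply_symm_apply]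
      _ = b.1 := hliftY b
  set q : X → (projTo K h '' X) :=
    fun x => ⟨projTo K h x.1, mem_image_of_mem _ x.2⟩ with hqdef
  have hq : Continuous q := (hp.comp continuous_subtype_val).subtype_mk _
  have hqs : Function.Surjective q := fun a => ⟨liftX a, Subtype.ext (hliftX a)⟩
  haveI : CompactSpace X := isCompact_iff_compactSpace.mp hXc
  have hqm : Topology.IsQuotientMap q := (hq.isClosedMap).isQuotientMap hq hqs
  have hFc : Continuous Ffun := by
    have hc : Continuous (fun a : (projTo K h '' X) => projTo K h (f (liftX a)).1) := by
      rw [hqm.continuous_iff]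
      have heq : (fun a : (projTo K h '' X) => projTo K h (f (liftX a)).1) ∘ q
          = fun x : X => projTo K h (f x).1 := by
        funext x
        exact keyX x (q x) rfl
      rw [heq]
      exact hp.comp (continuous_subtype_val.comp f.continuous)
    exact hc.subtype_mk _
  haveI : CompactSpace (projTo K h '' X : Set _) :=
    isCompact_iff_compactSpace.mp (hXc.image hp)
  refine ⟨Continuous.homeoOfEquivCompactToT2
    (f := ⟨Ffun, Gfun, hleft, hright⟩) hFc, ?_⟩
  intro x
  exact keyX x ⟨projTo K h x.1, mem_image_of_mem _ x.2⟩ rfl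

end Descent

/-- A homeomorphism between closed subspaces of an `ω₁`-indexed product of
compact metrizable spaces descends to the `α`-projections for a club of `α`. -/
theorem stmt9 (K : Ordinal → Type) [∀ ξ, TopologicalSpace (K ξ)]
    [∀ ξ, CompactSpace (K ξ)] [∀ ξ, TopologicalSpace.MetrizableSpace (K ξ)]
    (X Y : Set (∀ ξ : {ξ : Ordinal // ξ < omega1}, K ξ))
    (hX : IsClosed X) (hY : IsClosed Y) (f : X ≃ₜ Y) :
    ∃ C : Set Ordinal, IsClubIn C ∧
      ∀ α ∈ C, ∀ h : α ≤ omega1,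
        ∃ g : (projTo K h '' X) ≃ₜ (projTo K h '' Y),
          ∀ x : X, (g ⟨projTo K h x.1, mem_image_of_mem _ x.2⟩ : _).1
            = projTo K h (f x).1 := by
  classical
  refine ⟨{α | α < omega1 ∧
      (∀ x x' : X, EqBelow α x.1 x'.1 → EqBelow α (f x).1 (f x').1) ∧
      (∀ y y' : Y, EqBelow α y.1 y'.1 → EqBelow α (f.symm y).1 (f.symm y').1)},
    ⟨fun α hα => hα.1, ?_, ?_⟩, ?_⟩
  · intro β hβ
    obtain ⟨α, h1, h2, h3, h4⟩ := exists_descent_point K X Y hX hY f hβ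
    exact ⟨α, ⟨h2, h3, h4⟩, h1⟩
  · intro β hβ hβ0 hlim
    refine ⟨hβ, ?_, ?_⟩
    · intro x x' hxx' ξ hξ
      obtain ⟨α, hαC, hγα, hαβ⟩ := hlim ξ.1 hξ
      exact hαC.2.1 x x' (fun ζ hζ => hxx' ζ (hζ.trans hαβ)) ξ hγα
    · intro y y' hyy' ξ hξ
      obtain ⟨α, hαC, hγα, hαβ⟩ := hlim ξ.1 hξ
      exact hαC.2.2 y y' (fun ζ hζ => hyy' ζ (hζ.trans hαβ)) ξ hγα
  · intro α hαC h
    exact exists_homeo K X Y hX hY f h hαC.2.1 hαC.2.2
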